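/- Assume n ≥ 2. The map [(z, x, w)] ↦ ((x_1, w_1), [(z + x_1, (x_2, …, x_n), (w_2, …, w_n))]) is a well-defined bijection from {g ∈ F_n : w_1 ≠ ∞} onto {(a, b) ∈ ℤ × ℕ : a + b ≥ 0} × F_{n−1}, and it converts the product of F_n into the componentwise product, where the first components multiply by (a, v_1) · (a', w'_1) := (a + a', w'_1), defined when v_1 = a' + w'_1, and the second components multiply by the product of F_{n−1}. -/

import Mathlib

/-! Common setup for the groupoid `F_n` of the quantum sphere `S_q^{2n+1}`. -/

/-- `x_i + w_i ≥ 0` for all `i` (vacuous at coordinates where `w_i = ∞`). -/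
def okPos {n : ℕ} (x : Fin n → ℤ) (w : Fin n → ℕ∞) : Prop :=
  ∀ i, ∀ m : ℕ, w i = (m : ℕ∞) → 0 ≤ x i + (m : ℤ)

/-- The defining condition of `F̃_n`: whenever `w_i = ∞`,
`x_i = -z - x_1 - ⋯ - x_{i-1}` and `x_j = 0` for `j > i`. -/
def condF {n : ℕ} (z : ℤ) (x : Fin n → ℤ) (w : Fin n → ℕ∞) : Prop :=
  ∀ i, w i = ⊤ → (x i = -z - ∑ j ∈ Finset.Iio i, x j) ∧ (∀ j, i < j → x j = 0)

/-- The set `F̃_n` of admissible triples `(z, x, w)`. -/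
abbrev FTil (n : ℕ) : Type :=
  {p : ℤ × (Fin n → ℤ) × (Fin n → ℕ∞) // okPos p.2.1 p.2.2 ∧ condF p.1 p.2.1 p.2.2}

/-- `ν(w)`: keep coordinates before the first `∞`, replace all later ones by `∞`. -/
def qnu {n : ℕ} (w : Fin n → ℕ∞) : Fin n → ℕ∞ :=
  fun i => if ∃ j, j ≤ i ∧ w j = ⊤ then ⊤ else w i

/-- Addition of an integer to an extended natural number (`a + ∞ = ∞`). -/
def addZN (a : ℤ) (b : ℕ∞) : ℕ∞ :=
  if b = ⊤ then ⊤ else (((a + (b.toNat : ℤ)).toNat : ℕ) : ℕ∞)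

/-- Coordinatewise sum `x + w`. -/
def addxw {n : ℕ} (x : Fin n → ℤ) (w : Fin n → ℕ∞) : Fin n → ℕ∞ :=
  fun i => addZN (x i) (w i)

/-- The relation `(z, x, w) ∼ (z', x', w')` iff `z = z'`, `x = x'`, `ν(w) = ν(w')`. -/
def FRel {n : ℕ} (a b : FTil n) : Prop :=
  a.val.1 = b.val.1 ∧ a.val.2.1 = b.val.2.1 ∧ qnu a.val.2.2 = qnu b.val.2.2

instance FSetoid (n : ℕ) : Setoid (FTil n) where
  r := FRel
  iseqv := ⟨fun _ => ⟨rfl, rfl, rfl⟩, fun h => ⟨h.1.symm, h.2.1.symm, h.2.2.symm⟩,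
    fun h1 h2 => ⟨h1.1.trans h2.1, h1.2.1.trans h2.2.1, h1.2.2.trans h2.2.2⟩⟩

/-- The groupoid `F_n = F̃_n / ∼`. -/
abbrev Fgpd (n : ℕ) : Type := Quotient (FSetoid n)

/-- The `z`-component of a class in `F_n`. -/
def qzp {n : ℕ} (g : Fgpd n) : ℤ :=
  Quotient.lift (fun a : FTil n => a.val.1) (fun a b h => (h : FRel a b).1) g

/-- The `x`-component of a class in `F_n`. -/
def qxp {n : ℕ} (g : Fgpd n) : Fin n → ℤ :=
  Quotient.lift (fun a : FTil n => a.val.2.1) (fun a b h => (h : FRel a b).2.1) g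

/-- The source `ν(w)` of a class in `F_n`. -/
def qsrc {n : ℕ} (g : Fgpd n) : Fin n → ℕ∞ :=
  Quotient.lift (fun a : FTil n => qnu a.val.2.2) (fun a b h => (h : FRel a b).2.2) g

/-- The target `ν(x + w)` of a class in `F_n` (computed on a representative). -/
noncomputable def qtgt {n : ℕ} (g : Fgpd n) : Fin n → ℕ∞ :=
  qnu (addxw g.out.val.2.1 g.out.val.2.2)

/-- `qIsMul g h p` states that the product `g · h` is defined and equals `p`:
the source of `g` equals the target of `h`, and `p = [(z + z', x + x', w')]`
(a class in `F_n` is determined by its `z`-, `x`-components and its source). -/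
def qIsMul {n : ℕ} (g h p : Fgpd n) : Prop :=
  qsrc g = qtgt h ∧ qzp p = qzp g + qzp h ∧
    (∀ i, qxp p i = qxp g i + qxp h i) ∧ qsrc p = qsrc h

/-- The subset `(F_n)_{k,j}` of classes of degree `k` whose source vanishes in the
first `j` coordinates. -/
def Fkj (n : ℕ) (k : ℤ) (j : ℕ) : Set (Fgpd n) :=
  {g : Fgpd n | qzp g = k ∧ ∀ i : Fin n, (i : ℕ) < j → qsrc g i = 0}

section AuxLemmas

variable {n : ℕ}

lemma qnu_top_iff (w : Fin n → ℕ∞) (i : Fin n) :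
    qnu w i = ⊤ ↔ ∃ j, j ≤ i ∧ w j = ⊤ := by
  unfold qnu
  split
  · next h => simpa using h
  · next h => exact ⟨fun hw => absurd ⟨i, le_rfl, hw⟩ h, fun hw => absurd hw h⟩

lemma qnu_apply (w : Fin n → ℕ∞) (i : Fin n) (h : ¬ ∃ j, j ≤ i ∧ w j = ⊤) :
    qnu w i = w i := if_neg h

lemma exists_qnu_top_iff (w : Fin n → ℕ∞) (i : Fin n) :
    (∃ j, j ≤ i ∧ qnu w j = ⊤) ↔ ∃ j, j ≤ i ∧ w j = ⊤ := by
  constructor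
  · rintro ⟨j, hj, hw⟩
    obtain ⟨k, hk, hk2⟩ := (qnu_top_iff w j).1 hw
    exact ⟨k, hk.trans hj, hk2⟩
  · rintro ⟨j, hj, hw⟩
    exact ⟨j, hj, (qnu_top_iff w j).2 ⟨j, le_rfl, hw⟩⟩

lemma qnu_idem (w : Fin n → ℕ∞) : qnu (qnu w) = qnu w := by
  funext i
  show (if ∃ j, j ≤ i ∧ qnu w j = ⊤ then ⊤ else qnu w i) = qnu w i
  rw [if_congr (exists_qnu_top_iff w i) rfl rfl]
  by_cases h : ∃ j, j ≤ i ∧ w j = ⊤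
  · rw [if_pos h, (qnu_top_iff w i).2 h]
  · rw [if_neg h]

lemma addZN_top_iff (a : ℤ) (b : ℕ∞) : addZN a b = ⊤ ↔ b = ⊤ := by
  unfold addZN
  split
  · next h => simp [h]
  · next h => simp [h]

lemma qnu_addxw (x : Fin n → ℤ) (w : Fin n → ℕ∞) :
    qnu (addxw x w) = addxw x (qnu w) := by
  funext i
  show (if ∃ j, j ≤ i ∧ addxw x w j = ⊤ then ⊤ else addxw x w i) = addZN (x i) (qnu w i)
  have hc : (∃ j, j ≤ i ∧ addxw x w j = ⊤) ↔ ∃ j, j ≤ i ∧ w j = ⊤ := by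
    constructor
    · rintro ⟨j, hj, hw⟩; exact ⟨j, hj, (addZN_top_iff _ _).1 hw⟩
    · rintro ⟨j, hj, hw⟩; exact ⟨j, hj, (addZN_top_iff _ _).2 hw⟩
  rw [if_congr hc rfl rfl]
  by_cases h : ∃ j, j ≤ i ∧ w j = ⊤
  · rw [if_pos h]
    have : qnu w i = ⊤ := (qnu_top_iff w i).2 h
    rw [this]
    simp [addZN]
  · rw [if_neg h, qnu_apply w i h]
    rfl

/-- Membership transfers to the canonical representative. -/
lemma mem_qnu {z : ℤ} {x : Fin n → ℤ} {w : Fin n → ℕ∞}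
    (h1 : okPos x w) (h2 : condF z x w) :
    okPos x (qnu w) ∧ condF z x (qnu w) := by
  constructor
  · intro i m hm
    have hne : ¬ ∃ j, j ≤ i ∧ w j = ⊤ := by
      intro hc
      rw [(qnu_top_iff w i).2 hc] at hm
      exact (ENat.top_ne_coe m) hm
    exact h1 i m (by rwa [qnu_apply w i hne] at hm)
  · intro i hi
    obtain ⟨j, hj, hjw⟩ := (qnu_top_iff w i).1 hi
    obtain ⟨e1, e2⟩ := h2 j hjw
    rcases eq_or_lt_of_le hj with h | h
    · subst h; exact h2 j hjw
    · refine ⟨?_, fun k hk => e2 k (hj.trans_lt hk)⟩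
      have hxi : x i = 0 := e2 i h
      have hsum : ∑ k ∈ Finset.Iio i, x k = ∑ k ∈ Finset.Iic j, x k := by
        refine (Finset.sum_subset ?_ ?_).symm
        · intro k hk
          simp only [Finset.mem_Iic] at hk
          simp only [Finset.mem_Iio]
          exact lt_of_le_of_lt hk h
        · intro k _ hk
          simp only [Finset.mem_Iic, not_le] at hk
          exact e2 k hk
      have hiic : ∑ k ∈ Finset.Iic j, x k = ∑ k ∈ Finset.Iio j, x k + x j := by
        rw [← Finset.Iio_insert, Finset.sum_insert (by simp)]
        ring
      rw [hxi, hsum, hiic, e1]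
      ring

lemma canon_mem (g : Fgpd n) :
    okPos (qxp g) (qsrc g) ∧ condF (qzp g) (qxp g) (qsrc g) := by
  induction g using Quotient.ind with
  | _ a => exact mem_qnu a.prop.1 a.prop.2

/-- Canonical representative of a class. -/
def canon (g : Fgpd n) : FTil n := ⟨(qzp g, qxp g, qsrc g), canon_mem g⟩

lemma canon_eq (g : Fgpd n) : ⟦canon g⟧ = g := by
  induction g using Quotient.ind with
  | _ a => exact Quotient.sound ⟨rfl, rfl, qnu_idem _⟩

lemma qnu_qsrc (g : Fgpd n) : qnu (qsrc g) = qsrc g := by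
  induction g using Quotient.ind with
  | _ a => exact qnu_idem _

lemma class_eq {g h : Fgpd n} (h1 : qzp g = qzp h) (h2 : qxp g = qxp h)
    (h3 : qsrc g = qsrc h) : g = h := by
  rw [← canon_eq g, ← canon_eq h]
  exact Quotient.sound ⟨h1, h2, congrArg qnu h3⟩

lemma qtgt_eq (g : Fgpd n) : qtgt g = addxw (qxp g) (qsrc g) := by
  have h1 : qxp g = g.out.val.2.1 := by
    conv_lhs => rw [← Quotient.out_eq g]
    rfl
  have h2 : qsrc g = qnu g.out.val.2.2 := by
    conv_lhs => rw [← Quotient.out_eq g]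
    rfl
  rw [h1, h2, ← qnu_addxw]
  rfl

end AuxLemmas

section TailLemmas

variable {m : ℕ}

lemma sum_Iio_succ {M : Type*} [AddCommMonoid M] (f : Fin (m+2) → M) (i : Fin (m+1)) :
    ∑ j ∈ Finset.Iio i.succ, f j = f 0 + ∑ j ∈ Finset.Iio i, f j.succ := by
  have hset : Finset.Iio i.succ =
      insert (0 : Fin (m+2)) ((Finset.Iio i).map ⟨Fin.succ, Fin.succ_injective _⟩) := by
    ext a
    simp only [Finset.mem_Iio, Finset.mem_insert, Finset.mem_map,
      Function.Embedding.coeFn_mk]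
    rcases Fin.eq_zero_or_eq_succ a with rfl | ⟨j, rfl⟩
    · simp [Fin.succ_pos]
    · constructor
      · intro hlt
        exact Or.inr ⟨j, Fin.succ_lt_succ_iff.1 hlt, rfl⟩
      · rintro (h | ⟨k, hk, hke⟩)
        · exact absurd h (Fin.succ_ne_zero j)
        · have : k = j := Fin.succ_injective _ hke
          subst this
          exact Fin.succ_lt_succ_iff.2 hk
  rw [hset, Finset.sum_insert (by simp [Fin.succ_ne_zero]), Finset.sum_map]
  rfl

lemma qnu_succ (w : Fin (m+2) → ℕ∞) (hw : qnu w = w) (i : Fin (m+1)) :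
    qnu (fun j : Fin (m+1) => w j.succ) i = w i.succ := by
  show (if ∃ j, j ≤ i ∧ w j.succ = ⊤ then ⊤ else w i.succ) = w i.succ
  split
  · next h =>
    obtain ⟨j, hj, hj2⟩ := h
    have : qnu w i.succ = ⊤ :=
      (qnu_top_iff w i.succ).2 ⟨j.succ, Fin.succ_le_succ_iff.2 hj, hj2⟩
    rw [hw] at this
    exact this.symm
  · rfl

lemma qnu_zero (w : Fin (m+2) → ℕ∞) (h : w 0 ≠ ⊤) : qnu w 0 = w 0 := by
  refine qnu_apply w 0 ?_
  rintro ⟨j, hj, hw⟩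
  rw [Fin.le_zero_iff] at hj
  subst hj
  exact h hw

lemma fst_pos (g : Fgpd (m+2)) (hg : qsrc g 0 ≠ ⊤) :
    0 ≤ qxp g 0 + (((qsrc g 0).toNat : ℕ) : ℤ) :=
  (canon_mem g).1 0 _ (ENat.coe_toNat hg).symm

lemma tail_mem (g : Fgpd (m+2)) :
    okPos (fun i : Fin (m+1) => qxp g i.succ) (fun i => qsrc g i.succ) ∧
    condF (qzp g + qxp g 0) (fun i => qxp g i.succ) (fun i => qsrc g i.succ) := by
  obtain ⟨h1, h2⟩ := canon_mem g
  refine ⟨fun i k hk => h1 i.succ k hk, fun i hi => ?_⟩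
  obtain ⟨e1, e2⟩ := h2 i.succ hi
  refine ⟨?_, fun j hj => e2 j.succ (Fin.succ_lt_succ_iff.2 hj)⟩
  rw [sum_Iio_succ] at e1
  show qxp g i.succ = -(qzp g + qxp g 0) - ∑ j ∈ Finset.Iio i, qxp g j.succ
  rw [e1]; ring

/-- The bijection. -/
noncomputable def phi (g : {g : Fgpd (m+2) // qsrc g 0 ≠ ⊤}) :
    {q : ℤ × ℕ // 0 ≤ q.1 + (q.2 : ℤ)} × Fgpd (m+1) :=
  (⟨(qxp g.val 0, (qsrc g.val 0).toNat), fst_pos g.val g.prop⟩,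
   ⟦⟨(qzp g.val + qxp g.val 0, fun i => qxp g.val i.succ, fun i => qsrc g.val i.succ),
      tail_mem g.val⟩⟧)

lemma phi_z (g : {g : Fgpd (m+2) // qsrc g 0 ≠ ⊤}) :
    qzp (phi g).2 = qzp g.val + qxp g.val 0 := rfl

lemma phi_x (g : {g : Fgpd (m+2) // qsrc g 0 ≠ ⊤}) (i : Fin (m+1)) :
    qxp (phi g).2 i = qxp g.val i.succ := rfl

lemma phi_src (g : {g : Fgpd (m+2) // qsrc g 0 ≠ ⊤}) (i : Fin (m+1)) :
    qsrc (phi g).2 i = qsrc g.val i.succ := qnu_succ _ (qnu_qsrc g.val) i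

end TailLemmas

section ConsLemmas

variable {m : ℕ}

lemma addZN_coe (x : ℤ) (b : ℕ) : addZN x (b : ℕ∞) = (((x + b).toNat : ℕ) : ℕ∞) := by
  unfold addZN
  rw [if_neg (by simp)]
  simp

lemma comp0_iff (g h : Fgpd (m+2)) (hgs : qsrc g 0 ≠ ⊤) (hhs : qsrc h 0 ≠ ⊤) :
    qsrc g 0 = addZN (qxp h 0) (qsrc h 0) ↔
      (((qsrc g 0).toNat : ℤ) = qxp h 0 + (((qsrc h 0).toNat : ℕ) : ℤ)) := by
  have hg : qsrc g 0 = (((qsrc g 0).toNat : ℕ) : ℕ∞) := (ENat.coe_toNat hgs).symm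
  have hh : qsrc h 0 = (((qsrc h 0).toNat : ℕ) : ℕ∞) := (ENat.coe_toNat hhs).symm
  have hpos : 0 ≤ qxp h 0 + (((qsrc h 0).toNat : ℕ) : ℤ) := (canon_mem h).1 0 _ hh
  set bg := (qsrc g 0).toNat
  set bh := (qsrc h 0).toNat
  rw [hg, hh, addZN_coe]
  constructor
  · intro he
    have hbg : bg = (qxp h 0 + bh).toNat := by exact_mod_cast he
    omega
  · intro he
    have hbg : bg = (qxp h 0 + bh).toNat := by omega
    exact_mod_cast hbg

lemma qnu_cons_succ (b : ℕ∞) (hb : b ≠ ⊤) (w' : Fin (m+1) → ℕ∞) (i : Fin (m+1)) :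
    qnu (Fin.cons b w') i.succ = qnu w' i := by
  show (if ∃ j, j ≤ i.succ ∧ (Fin.cons b w' : Fin (m+2) → ℕ∞) j = ⊤ then ⊤
        else (Fin.cons b w' : Fin (m+2) → ℕ∞) i.succ)
      = (if ∃ j, j ≤ i ∧ w' j = ⊤ then ⊤ else w' i)
  have hc : (∃ j, j ≤ i.succ ∧ (Fin.cons b w' : Fin (m+2) → ℕ∞) j = ⊤) ↔
      ∃ j, j ≤ i ∧ w' j = ⊤ := by
    constructor
    · rintro ⟨j, hj, hw⟩
      rcases Fin.eq_zero_or_eq_succ j with rfl | ⟨k, rfl⟩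
      · exact absurd hw (by simpa using hb)
      · exact ⟨k, Fin.succ_le_succ_iff.1 hj, by simpa using hw⟩
    · rintro ⟨j, hj, hw⟩
      exact ⟨j.succ, Fin.succ_le_succ_iff.2 hj, by simpa using hw⟩
  rw [if_congr hc rfl rfl, Fin.cons_succ]

lemma cons_mem (a : ℤ) (b : ℕ) (hab : 0 ≤ a + (b : ℤ)) (c : Fgpd (m+1)) :
    okPos (Fin.cons a (qxp c)) (Fin.cons (b : ℕ∞) (qsrc c)) ∧
      condF (qzp c - a) (Fin.cons a (qxp c)) (Fin.cons (b : ℕ∞) (qsrc c)) := by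
  obtain ⟨h1, h2⟩ := canon_mem c
  constructor
  · intro i k hk
    induction i using Fin.cases with
    | zero =>
      rw [Fin.cons_zero] at hk ⊢
      have : b = k := by exact_mod_cast hk
      subst this
      exact hab
    | succ i =>
      rw [Fin.cons_succ] at hk ⊢
      exact h1 i k hk
  · intro i hi
    induction i using Fin.cases with
    | zero => exact absurd hi (by simp)
    | succ i =>
      rw [Fin.cons_succ] at hi
      obtain ⟨e1, e2⟩ := h2 i hi
      constructor
      · rw [Fin.cons_succ, sum_Iio_succ, e1, Fin.cons_zero]
        have : ∑ j ∈ Finset.Iio i, (Fin.cons a (qxp c) : Fin (m+2) → ℤ) j.succ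
            = ∑ j ∈ Finset.Iio i, qxp c j := by
          refine Finset.sum_congr rfl fun j _ => ?_
          rw [Fin.cons_succ]
        rw [this]
        ring
      · intro j hj
        rcases Fin.eq_zero_or_eq_succ j with rfl | ⟨k, rfl⟩
        · exact absurd hj (by simp [Fin.lt_def])
        · rw [Fin.cons_succ]
          exact e2 k (Fin.succ_lt_succ_iff.1 hj)

end ConsLemmas

/-- For `n ≥ 2`, the map
`[(z, x, w)] ↦ ((x₁, w₁), [(z + x₁, (x₂, …, x_n), (w₂, …, w_n))])` is a well-defined
bijection from `{g ∈ F_n : w₁ ≠ ∞}` onto `{(a, b) ∈ ℤ × ℕ : a + b ≥ 0} × F_{n-1}`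
converting the product of `F_n` into the componentwise product. -/
theorem stmt12 (n : ℕ) (hn : 2 ≤ n) :
    ∃ φ : {g : Fgpd n // qsrc g ⟨0, by omega⟩ ≠ ⊤} →
        {q : ℤ × ℕ // 0 ≤ q.1 + (q.2 : ℤ)} × Fgpd (n - 1),
      (∀ g : {g : Fgpd n // qsrc g ⟨0, by omega⟩ ≠ ⊤},
        (φ g).1.val.1 = qxp g.val ⟨0, by omega⟩ ∧
        ((φ g).1.val.2 : ℕ∞) = qsrc g.val ⟨0, by omega⟩ ∧
        qzp (φ g).2 = qzp g.val + qxp g.val ⟨0, by omega⟩ ∧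
        (∀ i : Fin (n - 1), qxp (φ g).2 i = qxp g.val ⟨(i : ℕ) + 1, by omega⟩) ∧
        (∀ i : Fin (n - 1), qsrc (φ g).2 i = qsrc g.val ⟨(i : ℕ) + 1, by omega⟩)) ∧
      Function.Bijective φ ∧
      (∀ g h : {g : Fgpd n // qsrc g ⟨0, by omega⟩ ≠ ⊤},
        qsrc g.val = qtgt h.val ↔
          (((φ g).1.val.2 : ℤ) = (φ h).1.val.1 + ((φ h).1.val.2 : ℤ) ∧
            qsrc (φ g).2 = qtgt (φ h).2)) ∧
      (∀ (g h : {g : Fgpd n // qsrc g ⟨0, by omega⟩ ≠ ⊤}) (p : Fgpd n),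
        qIsMul g.val h.val p → ∀ hps : qsrc p ⟨0, by omega⟩ ≠ ⊤,
          (φ ⟨p, hps⟩).1.val.1 = (φ g).1.val.1 + (φ h).1.val.1 ∧
          (φ ⟨p, hps⟩).1.val.2 = (φ h).1.val.2 ∧
          qIsMul (φ g).2 (φ h).2 (φ ⟨p, hps⟩).2) := by
  obtain ⟨m, rfl⟩ : ∃ m, n = m + 2 := ⟨n - 2, by omega⟩
  refine ⟨phi, ?_, ⟨?_, ?_⟩, ?_, ?_⟩
  · -- description of φ
    intro g
    exact ⟨rfl, ENat.coe_toNat g.prop, rfl, fun _ => rfl, fun i => phi_src g i⟩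
  · -- injective
    intro g h heq
    have e1 : qxp g.val 0 = qxp h.val 0 := congrArg (fun t => t.1.val.1) heq
    have e2 : (qsrc g.val 0).toNat = (qsrc h.val 0).toNat :=
      congrArg (fun t => t.1.val.2) heq
    have e3 : (phi g).2 = (phi h).2 := congrArg Prod.snd heq
    have ez : qzp g.val + qxp g.val 0 = qzp h.val + qxp h.val 0 := by
      rw [← phi_z g, ← phi_z h, e3]
    have ex : ∀ i : Fin (m+1), qxp g.val i.succ = qxp h.val i.succ := fun i => by
      rw [← phi_x g i, ← phi_x h i, e3]
    have es : ∀ i : Fin (m+1), qsrc g.val i.succ = qsrc h.val i.succ := fun i => by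
      rw [← phi_src g i, ← phi_src h i, e3]
    have hg' : qsrc g.val 0 ≠ ⊤ := g.prop
    have hh' : qsrc h.val 0 ≠ ⊤ := h.prop
    have es0 : qsrc g.val 0 = qsrc h.val 0 := by
      rw [← ENat.coe_toNat hg', ← ENat.coe_toNat hh', e2]
    refine Subtype.ext (class_eq (by omega) ?_ ?_)
    · funext i
      induction i using Fin.cases with
      | zero => exact e1
      | succ i => exact ex i
    · funext i
      induction i using Fin.cases with
      | zero => exact es0
      | succ i => exact es i
  · -- surjective
    rintro ⟨⟨⟨a, b⟩, hab⟩, c⟩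
    set trip : FTil (m+2) :=
      ⟨(qzp c - a, Fin.cons a (qxp c), Fin.cons (b : ℕ∞) (qsrc c)), cons_mem a b hab c⟩
      with htrip
    have hq0 : qsrc (⟦trip⟧ : Fgpd (m+2)) 0 = (b : ℕ∞) := by
      show qnu (Fin.cons (b : ℕ∞) (qsrc c)) 0 = (b : ℕ∞)
      rw [qnu_zero _ (by simp), Fin.cons_zero]
    have hg0 : qsrc (⟦trip⟧ : Fgpd (m+2)) 0 ≠ ⊤ := by
      rw [hq0]; simp
    refine ⟨⟨⟦trip⟧, hg0⟩, ?_⟩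
    refine Prod.ext ?_ ?_
    · apply Subtype.ext
      show (qxp (⟦trip⟧ : Fgpd (m+2)) 0, (qsrc (⟦trip⟧ : Fgpd (m+2)) 0).toNat) = (a, b)
      rw [hq0]
      show ((Fin.cons a (qxp c) : Fin (m+2) → ℤ) 0, ((b : ℕ∞)).toNat) = ((a, b) : ℤ × ℕ)
      rw [Fin.cons_zero]
      simp
    · apply class_eq
      · erw [phi_z]
        show qzp c - a + (Fin.cons a (qxp c) : Fin (m+2) → ℤ) 0 = qzp c
        rw [Fin.cons_zero]; ring
      · funext i
        erw [phi_x]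
      · funext i
        erw [phi_src]
        show qnu (Fin.cons (b : ℕ∞) (qsrc c)) i.succ = qsrc c i
        rw [qnu_cons_succ _ (by simp)]
        exact congrFun (qnu_qsrc c) i
  · -- source/target compatibility
    intro g h
    constructor
    · intro hst
      have H : ∀ i, qsrc g.val i = addZN (qxp h.val i) (qsrc h.val i) :=
        fun i => congrFun (hst.trans (qtgt_eq h.val)) i
      refine ⟨(comp0_iff g.val h.val g.prop h.prop).1 (H 0), ?_⟩
      funext i
      erw [phi_src, qtgt_eq]
      show qsrc g.val i.succ = addZN (qxp (phi h).2 i) (qsrc (phi h).2 i)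
      erw [phi_x, phi_src]
      exact H i.succ
    · rintro ⟨hb, hs⟩
      rw [qtgt_eq]
      funext i
      induction i using Fin.cases with
      | zero => exact (comp0_iff g.val h.val g.prop h.prop).2 hb
      | succ i =>
        have H := congrFun hs i
        erw [phi_src, qtgt_eq] at H
        show qsrc g.val i.succ = addZN (qxp h.val i.succ) (qsrc h.val i.succ)
        rw [← phi_x h i, ← phi_src h i]
        exact H
  · -- multiplicativity
    intro g h p hmul hps
    obtain ⟨hsrc, hz, hx, hs⟩ := hmul
    refine ⟨hx 0, by show (qsrc p 0).toNat = _; rw [hs]; rfl, ?_, ?_, ?_, ?_⟩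
    · funext i
      erw [phi_src, qtgt_eq]
      show qsrc g.val i.succ = addZN (qxp (phi h).2 i) (qsrc (phi h).2 i)
      erw [phi_x, phi_src]
      exact congrFun (hsrc.trans (qtgt_eq h.val)) i.succ
    · show qzp (phi ⟨p, hps⟩).2 = _
      erw [phi_z, phi_z, phi_z, hz, hx 0]
      ring
    · intro i
      show qxp (phi ⟨p, hps⟩).2 i = _
      erw [phi_x, phi_x, phi_x]
      exact hx i.succ
    · funext i
      show qsrc (phi ⟨p, hps⟩).2 i = qsrc (phi h).2 i
      erw [phi_src, phi_src, hs]
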